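/- arXiv:2204.07261 — 3 statements merged into one kernel-verified Lean document; each statement's English description precedes it below -/
import Mathlib

section
/- Evolution of the row norms under one gradient step (Lemma 3.3): Let α be any weights, η_L > 0, and define α̃ := α − η_L ∇_α J_L(α). For k ∈ {1,…,L} and m ∈ {1,…,d} define f_{k,m}(α) := (1/2) L ‖α_{k,m}‖₂², where α_{k,m} is the m-th row of α_k. Under activation assumption (i), f_{k,m}(α̃)^{1/2} ≤ f_{k,m}(α)^{1/2} + (1/√2) η_L ((1/N) Σ_{i=1}^N ‖h_{k-1}^{x_i}(α)‖₂² ‖G_k^{x_i,y_i}(α)‖_∞²)^{1/2}. -/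
open Finset

noncomputable section

/-- Euclidean norm of a vector in `ℝ^d`. -/
def vnorm {d : ℕ} (v : Fin d → ℝ) : ℝ := Real.sqrt (∑ i, v i ^ 2)

/-- Frobenius norm of a `d × d` real matrix. -/
def frobNorm {d : ℕ} (A : Fin d → Fin d → ℝ) : ℝ := Real.sqrt (∑ i, ∑ j, A i j ^ 2)

/-- Matrix-vector product. -/
def mulVec' {d : ℕ} (A : Fin d → Fin d → ℝ) (v : Fin d → ℝ) : Fin d → ℝ :=
  fun i => ∑ j, A i j * v j

/-- Matrix-matrix product. -/
def matMul' {d : ℕ} (A B : Fin d → Fin d → ℝ) : Fin d → Fin d → ℝ :=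
  fun i j => ∑ l, A i l * B l j

/-- Hidden states of the residual network: `h_0 = x` and
`h_{k+1} = h_k + L^{-1/2} σ_d(α_{k+1} h_k)`, where the weight of the (1-based)
layer `k+1` is stored at the (0-based) index `k`. -/
def hiddenState {d L : ℕ} (σ : ℝ → ℝ) (α : Fin L → Fin d → Fin d → ℝ) (x : Fin d → ℝ) :
    ℕ → Fin d → ℝ
  | 0 => x
  | k + 1 =>
      if h : k < L then
        fun i => hiddenState σ α x k i + (Real.sqrt L)⁻¹ * σ (mulVec' (α ⟨k, h⟩) (hiddenState σ α x k) i)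
      else hiddenState σ α x k

/-- One factor `I_d + L^{-1/2} diag(σ'(α_{k+1} h_k)) α_{k+1}` of the layer-to-output
Jacobian (0-based index `k`). -/
def layerJac {d L : ℕ} (σ : ℝ → ℝ) (α : Fin L → Fin d → Fin d → ℝ) (x : Fin d → ℝ)
    (k : ℕ) (h : k < L) : Fin d → Fin d → ℝ :=
  fun i i' => (if i = i' then (1 : ℝ) else 0) +
    (Real.sqrt L)⁻¹ * deriv σ (mulVec' (α ⟨k, h⟩) (hiddenState σ α x k) i) * α ⟨k, h⟩ i i'

/-- Layer-to-output Jacobian `M_k^x(α) = ∂h_L/∂h_k`, where `k` is the 1-based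
paper index, `0 ≤ k ≤ L`. -/
def jacM {d L : ℕ} (σ : ℝ → ℝ) (α : Fin L → Fin d → Fin d → ℝ) (x : Fin d → ℝ) :
    ℕ → Fin d → Fin d → ℝ
  | k =>
      if h : k < L then matMul' (jacM σ α x (k + 1)) (layerJac σ α x k h)
      else fun i i' => if i = i' then 1 else 0
  termination_by k => L - k
  decreasing_by omega

/-- Mean-squared training loss `J_L`. -/
def loss {d L N : ℕ} (σ : ℝ → ℝ) (x y : Fin N → Fin d → ℝ)
    (α : Fin L → Fin d → Fin d → ℝ) : ℝ :=
  (1 / (2 * N)) * ∑ i, ∑ j, (y i j - hiddenState σ α (x i) L j) ^ 2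

/-- Partial derivative of the loss with respect to the `(m,n)` entry of the
`k`-th weight matrix. -/
def gradEntry {d L N : ℕ} (σ : ℝ → ℝ) (x y : Fin N → Fin d → ℝ)
    (α : Fin L → Fin d → Fin d → ℝ) (k : Fin L) (m n : Fin d) : ℝ :=
  fderiv ℝ (loss σ x y) α (Pi.single k (Pi.single m (Pi.single n 1)))

/-- `G_k^{x,y}(α) = (M_k^x(α))ᵀ (ŷ(x,α) − y)`; `k` is the 1-based paper index. -/
def Gvec {d L : ℕ} (σ : ℝ → ℝ) (α : Fin L → Fin d → Fin d → ℝ) (x y : Fin d → ℝ)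
    (k : ℕ) : Fin d → ℝ :=
  fun n => ∑ j, jacM σ α x k j n * (hiddenState σ α x L j - y j)

/-- Assumption (i) on the activation function: `σ ∈ C²`, `σ'(0) = 1`, and
`|σ(z)| ≤ |z|`, `|σ'(z)| ≤ 1`, `|σ''(z)| ≤ 1` for all `z`. -/
def ActAssump (σ : ℝ → ℝ) : Prop :=
  ContDiff ℝ 2 σ ∧ deriv σ 0 = 1 ∧
    ∀ z : ℝ, |σ z| ≤ |z| ∧ |deriv σ z| ≤ 1 ∧ |deriv (deriv σ) z| ≤ 1

section Aux

variable {d L : ℕ} {σ : ℝ → ℝ}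

lemma eval_diff (t : Fin L) (i j : Fin d) :
    Differentiable ℝ (fun β : Fin L → Fin d → Fin d → ℝ => β t i j) := by
  fun_prop

lemma sigma_diff (hσ : ActAssump σ) : Differentiable ℝ σ :=
  hσ.1.differentiable (by norm_num)

lemma hidden_diffAt (hσ : ActAssump σ) (x : Fin d → ℝ)
    (α : Fin L → Fin d → Fin d → ℝ) :
    ∀ t (i : Fin d), DifferentiableAt ℝ (fun β : Fin L → Fin d → Fin d → ℝ =>
      hiddenState σ β x t i) α := by
  intro t
  induction t with
  | zero => intro i; simp [hiddenState]
  | succ t ih =>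
    intro i
    by_cases h : t < L
    · have heq : (fun β : Fin L → Fin d → Fin d → ℝ => hiddenState σ β x (t + 1) i)
          = fun β => hiddenState σ β x t i +
            (Real.sqrt L)⁻¹ * σ (∑ j, β ⟨t, h⟩ i j * hiddenState σ β x t j) := by
        funext β; simp [hiddenState, h, mulVec']
      rw [heq]
      have hinner : DifferentiableAt ℝ
          (fun β : Fin L → Fin d → Fin d → ℝ =>
            ∑ j, β ⟨t, h⟩ i j * hiddenState σ β x t j) α := by
        apply DifferentiableAt.fun_sum
        intro j _
        exact ((eval_diff ⟨t, h⟩ i j) α).mul (ih j)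
      exact (ih i).add ((differentiableAt_const _).mul
        ((sigma_diff hσ _).comp α hinner))
    · have heq : (fun β : Fin L → Fin d → Fin d → ℝ => hiddenState σ β x (t + 1) i)
          = fun β => hiddenState σ β x t i := by
        funext β; simp [hiddenState, h]
      rw [heq]; exact ih i

lemma loss_diffAt {N : ℕ} (hσ : ActAssump σ) (x y : Fin N → Fin d → ℝ)
    (α : Fin L → Fin d → Fin d → ℝ) :
    DifferentiableAt ℝ (loss σ x y) α := by
  have heq : loss σ x y = fun β : Fin L → Fin d → Fin d → ℝ =>
      (1 / (2 * (N : ℝ))) * ∑ i, ∑ j, (y i j - hiddenState σ β (x i) L j) ^ 2 := rfl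
  rw [heq]
  exact (differentiableAt_const _).mul (DifferentiableAt.fun_sum fun i _ =>
    DifferentiableAt.fun_sum fun j _ =>
      ((differentiableAt_const _).sub (hidden_diffAt hσ (x i) α L j)).pow 2)

end Aux
section Aux2

variable {d L : ℕ}

/-- Directional derivative of the hidden state along direction `E`. -/
def Dv (σ : ℝ → ℝ) (α E : Fin L → Fin d → Fin d → ℝ) (x : Fin d → ℝ) :
    ℕ → Fin d → ℝ
  | 0 => fun _ => 0
  | t + 1 => fun i =>
      if h : t < L then
        Dv σ α E x t i + (Real.sqrt L)⁻¹ *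
          deriv σ (mulVec' (α ⟨t, h⟩) (hiddenState σ α x t) i) *
          ((∑ j, E ⟨t, h⟩ i j * hiddenState σ α x t j)
            + ∑ j, α ⟨t, h⟩ i j * Dv σ α E x t j)
      else Dv σ α E x t i

variable {σ : ℝ → ℝ}

lemma hasDerivAt_hidden (hσ : ActAssump σ) (x : Fin d → ℝ)
    (α E : Fin L → Fin d → Fin d → ℝ) :
    ∀ t (i : Fin d),
      HasDerivAt (fun s : ℝ => hiddenState σ (α + s • E) x t i)
        (Dv σ α E x t i) 0 := by
  intro t
  induction t with
  | zero => intro i; simpa [hiddenState, Dv] using hasDerivAt_const (0 : ℝ) (x i)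
  | succ t ih =>
    intro i
    have hzero : α + (0 : ℝ) • E = α := by simp
    by_cases h : t < L
    · have heq : (fun s : ℝ => hiddenState σ (α + s • E) x (t + 1) i)
          = fun s => hiddenState σ (α + s • E) x t i +
            (Real.sqrt L)⁻¹ *
              σ (∑ j, (α ⟨t, h⟩ i j + s * E ⟨t, h⟩ i j) * hiddenState σ (α + s • E) x t j) := by
        funext s; simp [hiddenState, h, mulVec']
      rw [heq]
      have hu : HasDerivAt (fun s : ℝ =>
          ∑ j, (α ⟨t, h⟩ i j + s * E ⟨t, h⟩ i j) * hiddenState σ (α + s • E) x t j)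
          (∑ j, (E ⟨t, h⟩ i j * hiddenState σ α x t j
            + α ⟨t, h⟩ i j * Dv σ α E x t j)) 0 := by
        apply HasDerivAt.fun_sum
        intro j _
        have h1 : HasDerivAt (fun s : ℝ => α ⟨t, h⟩ i j + s * E ⟨t, h⟩ i j)
            (E ⟨t, h⟩ i j) 0 := by
          simpa using ((hasDerivAt_id (0 : ℝ)).mul_const (E ⟨t, h⟩ i j)).const_add
            (α ⟨t, h⟩ i j)
        have := h1.fun_mul (ih j)
        simpa [hzero] using this
      have hcomp : HasDerivAt (fun s : ℝ =>
          σ (∑ j, (α ⟨t, h⟩ i j + s * E ⟨t, h⟩ i j) * hiddenState σ (α + s • E) x t j))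
          (deriv σ (∑ j, α ⟨t, h⟩ i j * hiddenState σ α x t j) *
            ∑ j, (E ⟨t, h⟩ i j * hiddenState σ α x t j + α ⟨t, h⟩ i j * Dv σ α E x t j)) 0 := by
        have hσd := (sigma_diff hσ
          ((fun s : ℝ => ∑ j, (α ⟨t, h⟩ i j + s * E ⟨t, h⟩ i j) *
            hiddenState σ (α + s • E) x t j) 0)).hasDerivAt
        have := HasDerivAt.comp (0 : ℝ) hσd hu
        simpa [hzero, Function.comp_def] using this
      have := (ih i).fun_add (hcomp.const_mul ((Real.sqrt L)⁻¹))
      refine this.congr_deriv ?_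
      simp only [Dv, dif_pos h, mulVec']
      rw [Finset.sum_add_distrib]
      ring
    · have heq : (fun s : ℝ => hiddenState σ (α + s • E) x (t + 1) i)
          = fun s => hiddenState σ (α + s • E) x t i := by
        funext s; simp [hiddenState, h]
      rw [heq]
      simpa [Dv, h] using ih i

end Aux2
section Aux3

variable {d L N : ℕ} {σ : ℝ → ℝ}

lemma fderiv_loss_eq (hσ : ActAssump σ) (x y : Fin N → Fin d → ℝ)
    (α E : Fin L → Fin d → Fin d → ℝ) :
    fderiv ℝ (loss σ x y) α E =
      (1 / (N : ℝ)) * ∑ i, ∑ j,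
        (hiddenState σ α (x i) L j - y i j) * Dv σ α E (x i) L j := by
  have hzero : α + (0 : ℝ) • E = α := by simp
  have hline : HasDerivAt (fun s : ℝ => α + s • E) E 0 := by
    simpa using ((hasDerivAt_id (0 : ℝ)).smul_const E).const_add α
  have hF := (loss_diffAt hσ x y α).hasFDerivAt
  rw [← hzero] at hF
  have hcomp : HasDerivAt (fun s : ℝ => loss σ x y (α + s • E))
      (fderiv ℝ (loss σ x y) α E) 0 := by
    have := hF.comp_hasDerivAt 0 hline
    simpa [hzero, Function.comp_def] using this
  have hexp : HasDerivAt (fun s : ℝ => loss σ x y (α + s • E))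
      ((1 / (2 * (N : ℝ))) * ∑ i, ∑ j,
        ((2 : ℕ) * (y i j - hiddenState σ α (x i) L j) ^ 1 *
          (0 - Dv σ α E (x i) L j))) 0 := by
    have heq : (fun s : ℝ => loss σ x y (α + s • E))
        = fun s => (1 / (2 * (N : ℝ))) * ∑ i, ∑ j,
            (y i j - hiddenState σ (α + s • E) (x i) L j) ^ 2 := rfl
    rw [heq]
    apply HasDerivAt.const_mul
    apply HasDerivAt.fun_sum; intro i _
    apply HasDerivAt.fun_sum; intro j _
    have hterm := ((hasDerivAt_const (0 : ℝ) (y i j)).fun_sub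
      (hasDerivAt_hidden hσ (x i) α E L j)).fun_pow 2
    simpa [hzero] using hterm
  have := hcomp.unique hexp
  rw [this]
  rcases Nat.eq_zero_or_pos N with hN | hN
  · subst hN; simp
  have hNne : (N : ℝ) ≠ 0 := by positivity
  rw [Finset.mul_sum, Finset.mul_sum]
  apply Finset.sum_congr rfl; intro i _
  rw [Finset.mul_sum, Finset.mul_sum]
  apply Finset.sum_congr rfl; intro j _
  field_simp
  ring

end Aux3
section Aux4

variable {d L : ℕ} {σ : ℝ → ℝ}

variable (σ) in
/-- abbreviation for the single-entry direction -/
def Edir {d L : ℕ} (k : Fin L) (m n : Fin d) : Fin L → Fin d → Fin d → ℝ :=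
  Pi.single k (Pi.single m (Pi.single n 1))

lemma Edir_ne {k : Fin L} {m n : Fin d} {t : Fin L} (h : t ≠ k) :
    Edir k m n t = 0 := Pi.single_eq_of_ne h _

lemma Edir_sum {k : Fin L} {m n : Fin d} (i : Fin d) (v : Fin d → ℝ) :
    ∑ j, Edir k m n k i j * v j = if i = m then v n else 0 := by
  unfold Edir
  rcases eq_or_ne i m with rfl | him
  · simp [Pi.single_apply]
  · simp [Pi.single_eq_of_ne him, Pi.single_apply, him]

lemma Dv_zero (x : Fin d → ℝ) (α : Fin L → Fin d → Fin d → ℝ)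
    (k : Fin L) (m n : Fin d) :
    ∀ t, t ≤ (k : ℕ) → ∀ i, Dv σ α (Edir k m n) x t i = 0 := by
  intro t
  induction t with
  | zero => intro _ i; simp [Dv]
  | succ t ih =>
    intro ht i
    have hlt : t < L := lt_of_lt_of_le (Nat.lt_of_succ_le ht) (Nat.le_of_lt k.isLt)
    have hne : (⟨t, hlt⟩ : Fin L) ≠ k := by
      intro hc
      have : t = (k : ℕ) := congrArg Fin.val hc
      omega
    simp only [Dv, dif_pos hlt]
    rw [Edir_ne hne]
    have h0 : ∀ j, Dv σ α (Edir k m n) x t j = 0 := ih (by omega)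
    simp [h0]

lemma Dv_succ (x : Fin d → ℝ) (α : Fin L → Fin d → Fin d → ℝ)
    (k : Fin L) (m n : Fin d) (i : Fin d) :
    Dv σ α (Edir k m n) x ((k : ℕ) + 1) i =
      (Real.sqrt L)⁻¹ * deriv σ (mulVec' (α k) (hiddenState σ α x (k : ℕ)) i) *
        (if i = m then hiddenState σ α x (k : ℕ) n else 0) := by
  have hlt : (k : ℕ) < L := k.isLt
  have hk : (⟨(k : ℕ), hlt⟩ : Fin L) = k := Fin.eta k hlt
  simp only [Dv, dif_pos hlt, hk]
  rw [Edir_sum]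
  have h0 : ∀ j, Dv σ α (Edir k m n) x (k : ℕ) j = 0 := Dv_zero x α k m n _ le_rfl
  simp [h0]

lemma Dv_jacM (x : Fin d → ℝ) (α : Fin L → Fin d → Fin d → ℝ)
    (k : Fin L) (m n : Fin d) (t : ℕ) (h1 : (k : ℕ) + 1 ≤ t) (h2 : t ≤ L) :
    ∀ j, Dv σ α (Edir k m n) x L j =
        ∑ p, jacM σ α x t j p * Dv σ α (Edir k m n) x t p := by
  intro j
  rcases eq_or_lt_of_le h2 with rfl | hlt
  · rw [jacM]
    simp
  · have IH := Dv_jacM x α k m n (t + 1) (by omega) (by omega) j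
    have hstep : ∀ p, Dv σ α (Edir k m n) x (t + 1) p =
        ∑ q, layerJac σ α x t hlt p q * Dv σ α (Edir k m n) x t q := by
      intro p
      have hne : (⟨t, hlt⟩ : Fin L) ≠ k := by
        intro hc
        have : t = (k : ℕ) := congrArg Fin.val hc
        omega
      simp only [Dv, dif_pos hlt]
      rw [Edir_ne hne]
      simp only [layerJac, Pi.zero_apply, zero_mul, Finset.sum_const_zero, zero_add]
      rw [Finset.sum_congr rfl (fun q _ => add_mul _ _ _), Finset.sum_add_distrib]
      congr 1
      · simp [Finset.sum_ite_eq' , eq_comm]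
      · rw [Finset.mul_sum]
        apply Finset.sum_congr rfl; intro q _
        ring
    rw [IH]
    conv_rhs => rw [jacM]
    rw [dif_pos hlt]
    simp only [matMul']
    rw [Finset.sum_congr rfl (fun p _ => by rw [hstep p])]
    rw [Finset.sum_congr rfl (fun p hp => Finset.mul_sum _ _ _),
      Finset.sum_comm]
    apply Finset.sum_congr rfl; intro q _
    rw [Finset.sum_mul]
    apply Finset.sum_congr rfl; intro p _
    ring
termination_by L - t

end Aux4
section Aux5

variable {d L N : ℕ} {σ : ℝ → ℝ}

lemma gradEntry_formula (hσ : ActAssump σ) (x y : Fin N → Fin d → ℝ)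
    (α : Fin L → Fin d → Fin d → ℝ) (k : Fin L) (m n : Fin d) :
    gradEntry σ x y α k m n =
      (1 / (N : ℝ)) * ∑ i,
        (Real.sqrt L)⁻¹ *
          deriv σ (mulVec' (α k) (hiddenState σ α (x i) (k : ℕ)) m) *
          hiddenState σ α (x i) (k : ℕ) n *
          Gvec σ α (x i) (y i) ((k : ℕ) + 1) m := by
  have hE : Pi.single k (Pi.single m (Pi.single n 1)) = Edir (d := d) (L := L) k m n := rfl
  rw [gradEntry, hE, fderiv_loss_eq hσ]
  congr 1
  apply Finset.sum_congr rfl; intro i _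
  have hD : ∀ j, Dv σ α (Edir k m n) (x i) L j =
      jacM σ α (x i) ((k : ℕ) + 1) j m *
        ((Real.sqrt L)⁻¹ *
          deriv σ (mulVec' (α k) (hiddenState σ α (x i) (k : ℕ)) m) *
          hiddenState σ α (x i) (k : ℕ) n) := by
    intro j
    rw [Dv_jacM (x i) α k m n ((k : ℕ) + 1) le_rfl k.isLt j]
    rw [Finset.sum_congr rfl (fun p _ => by rw [Dv_succ])]
    simp [mul_ite, mul_zero, Finset.sum_ite_eq']
  rw [Finset.sum_congr rfl (fun j _ => by rw [hD j])]
  have hG : Gvec σ α (x i) (y i) ((k : ℕ) + 1) m =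
      ∑ j, jacM σ α (x i) ((k : ℕ) + 1) j m *
        (hiddenState σ α (x i) L j - y i j) := rfl
  rw [hG, Finset.mul_sum]
  apply Finset.sum_congr rfl; intro j _
  ring

end Aux5
/-- **Evolution of the row norms under one gradient step (Lemma 3.3).**
Here `f_{k,m}(α) = (1/2) L ‖α_{k,m}‖₂²` and `α̃ = α − η ∇J(α)`; the norm
`‖·‖` on `Fin d → ℝ` is the sup norm `‖·‖_∞`. -/
theorem statement9 {d L N : ℕ} (hd : 1 ≤ d) (hL : 1 ≤ L) (hN : 1 ≤ N)
    {σ : ℝ → ℝ} (hσ : ActAssump σ)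
    (x y : Fin N → Fin d → ℝ) (α : Fin L → Fin d → Fin d → ℝ)
    (η : ℝ) (hη : 0 < η) (k : Fin L) (m : Fin d) :
    Real.sqrt ((1 / 2) * L * ∑ n, (α k m n - η * gradEntry σ x y α k m n) ^ 2)
      ≤ Real.sqrt ((1 / 2) * L * ∑ n, α k m n ^ 2)
        + (Real.sqrt 2)⁻¹ * η *
          Real.sqrt ((1 / N) * ∑ i,
            vnorm (hiddenState σ α (x i) (k : ℕ)) ^ 2
              * ‖Gvec σ α (x i) (y i) ((k : ℕ) + 1)‖ ^ 2) := by
  classical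
  have hLpos : (0 : ℝ) < L := by exact_mod_cast hL
  have hNpos : (0 : ℝ) < N := by exact_mod_cast hN
  set c : ℝ := (Real.sqrt L)⁻¹ with hc
  set Sa : ℝ := ∑ n, α k m n ^ 2 with hSa
  set Sg : ℝ := ∑ n, gradEntry σ x y α k m n ^ 2 with hSg
  set Sd : ℝ := ∑ n, (α k m n - η * gradEntry σ x y α k m n) ^ 2 with hSd
  set T : ℝ := (1 / (N : ℝ)) * ∑ i,
      vnorm (hiddenState σ α (x i) (k : ℕ)) ^ 2
        * ‖Gvec σ α (x i) (y i) ((k : ℕ) + 1)‖ ^ 2 with hT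
  have hc2 : c ^ 2 = (L : ℝ)⁻¹ := by
    rw [hc, inv_pow, Real.sq_sqrt hLpos.le]
  -- triangle inequality in Euclidean space
  have htri : Real.sqrt Sd ≤ Real.sqrt Sa + η * Real.sqrt Sg := by
    let v : EuclideanSpace ℝ (Fin d) := WithLp.toLp 2 fun n => α k m n
    let w : EuclideanSpace ℝ (Fin d) := WithLp.toLp 2 fun n => η * gradEntry σ x y α k m n
    have h1 := norm_sub_le v w
    have hv : ‖v‖ = Real.sqrt Sa := by
      rw [EuclideanSpace.norm_eq, hSa]
      congr 1
      exact Finset.sum_congr rfl fun n _ => by simp only [v, PiLp.toLp_apply, Real.norm_eq_abs, sq_abs]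
    have hw : ‖w‖ = η * Real.sqrt Sg := by
      rw [EuclideanSpace.norm_eq]
      have h2 : ∑ n, ‖w n‖ ^ 2 = η ^ 2 * Sg := by
        rw [hSg, Finset.mul_sum]
        exact Finset.sum_congr rfl fun n _ => by
          simp only [w, PiLp.toLp_apply, Real.norm_eq_abs, sq_abs]; ring
      rw [h2, Real.sqrt_mul (sq_nonneg η), Real.sqrt_sq hη.le]
    have hvw : ‖v - w‖ = Real.sqrt Sd := by
      rw [EuclideanSpace.norm_eq, hSd]
      congr 1
      exact Finset.sum_congr rfl fun n _ => by
        simp only [v, w, PiLp.toLp_apply, PiLp.sub_apply, Real.norm_eq_abs, sq_abs]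
    rw [hvw, hv, hw] at h1
    exact h1
  -- key bound on the gradient row
  have hterm : ∀ n', (L : ℝ) * gradEntry σ x y α k m n' ^ 2 ≤
      (1 / (N : ℝ)) * ∑ i, hiddenState σ α (x i) (k : ℕ) n' ^ 2 *
        ‖Gvec σ α (x i) (y i) ((k : ℕ) + 1)‖ ^ 2 := by
    intro n'
    rw [gradEntry_formula hσ x y α k m n']
    set q : Fin N → ℝ := fun i =>
      c * deriv σ (mulVec' (α k) (hiddenState σ α (x i) (k : ℕ)) m) *
        hiddenState σ α (x i) (k : ℕ) n' *
        Gvec σ α (x i) (y i) ((k : ℕ) + 1) m with hq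
    have hCS : (∑ i, q i) ^ 2 ≤ (N : ℝ) * ∑ i, q i ^ 2 := by
      have := sq_sum_le_card_mul_sum_sq (s := (Finset.univ : Finset (Fin N))) (f := q)
      simpa using this
    have hqb : ∀ i, q i ^ 2 ≤ (L : ℝ)⁻¹ *
        (hiddenState σ α (x i) (k : ℕ) n' ^ 2 *
          ‖Gvec σ α (x i) (y i) ((k : ℕ) + 1)‖ ^ 2) := by
      intro i
      set z := mulVec' (α k) (hiddenState σ α (x i) (k : ℕ)) m with hz
      have hs : deriv σ z ^ 2 ≤ 1 := by
        have h1 := (hσ.2.2 z).2.1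
        have := abs_nonneg (deriv σ z)
        nlinarith [sq_abs (deriv σ z)]
      have hb : Gvec σ α (x i) (y i) ((k : ℕ) + 1) m ^ 2 ≤
          ‖Gvec σ α (x i) (y i) ((k : ℕ) + 1)‖ ^ 2 := by
        have h2 : |Gvec σ α (x i) (y i) ((k : ℕ) + 1) m| ≤
            ‖Gvec σ α (x i) (y i) ((k : ℕ) + 1)‖ := by
          simpa [Real.norm_eq_abs] using
            norm_le_pi_norm (Gvec σ α (x i) (y i) ((k : ℕ) + 1)) m
        nlinarith [sq_abs (Gvec σ α (x i) (y i) ((k : ℕ) + 1) m),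
          abs_nonneg (Gvec σ α (x i) (y i) ((k : ℕ) + 1) m),
          norm_nonneg (Gvec σ α (x i) (y i) ((k : ℕ) + 1))]
      calc q i ^ 2 = c ^ 2 * (deriv σ z ^ 2 *
            (hiddenState σ α (x i) (k : ℕ) n' ^ 2 *
              Gvec σ α (x i) (y i) ((k : ℕ) + 1) m ^ 2)) := by rw [hq]; ring
        _ ≤ (L : ℝ)⁻¹ * (1 * (hiddenState σ α (x i) (k : ℕ) n' ^ 2 *
              ‖Gvec σ α (x i) (y i) ((k : ℕ) + 1)‖ ^ 2)) := by
            rw [hc2]; gcongr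
        _ = (L : ℝ)⁻¹ * (hiddenState σ α (x i) (k : ℕ) n' ^ 2 *
              ‖Gvec σ α (x i) (y i) ((k : ℕ) + 1)‖ ^ 2) := by ring
    calc (L : ℝ) * ((1 / (N : ℝ)) * ∑ i, q i) ^ 2
        = (L : ℝ) * (1 / (N : ℝ)) ^ 2 * (∑ i, q i) ^ 2 := by ring
      _ ≤ (L : ℝ) * (1 / (N : ℝ)) ^ 2 * ((N : ℝ) * ∑ i, q i ^ 2) := by
          gcongr
      _ = (L : ℝ) * (1 / (N : ℝ)) * ∑ i, q i ^ 2 := by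
          field_simp
      _ ≤ (L : ℝ) * (1 / (N : ℝ)) * ∑ i, (L : ℝ)⁻¹ *
            (hiddenState σ α (x i) (k : ℕ) n' ^ 2 *
              ‖Gvec σ α (x i) (y i) ((k : ℕ) + 1)‖ ^ 2) :=
          mul_le_mul_of_nonneg_left (Finset.sum_le_sum fun i _ => hqb i)
            (by positivity)
      _ = (1 / (N : ℝ)) * ∑ i, hiddenState σ α (x i) (k : ℕ) n' ^ 2 *
            ‖Gvec σ α (x i) (y i) ((k : ℕ) + 1)‖ ^ 2 := by
          rw [Finset.mul_sum, Finset.mul_sum]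
          apply Finset.sum_congr rfl; intro i _
          have hLne : (L : ℝ) ≠ 0 := ne_of_gt hLpos
          field_simp
  have hkey : (L : ℝ) * Sg ≤ T := by
    calc (L : ℝ) * Sg = ∑ n', (L : ℝ) * gradEntry σ x y α k m n' ^ 2 := by
          rw [hSg, Finset.mul_sum]
      _ ≤ ∑ n', (1 / (N : ℝ)) * ∑ i, hiddenState σ α (x i) (k : ℕ) n' ^ 2 *
            ‖Gvec σ α (x i) (y i) ((k : ℕ) + 1)‖ ^ 2 :=
          Finset.sum_le_sum fun n' _ => hterm n'
      _ = T := by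
          rw [hT, ← Finset.mul_sum]
          congr 1
          rw [Finset.sum_comm]
          apply Finset.sum_congr rfl; intro i _
          rw [← Finset.sum_mul, vnorm, Real.sq_sqrt (by positivity)]
  -- assemble
  have hq12 : ∀ S : ℝ, Real.sqrt ((1 / 2) * (L : ℝ) * S)
      = Real.sqrt ((1 / 2) * (L : ℝ)) * Real.sqrt S := fun S =>
    Real.sqrt_mul (by positivity) S
  rw [hq12, hq12]
  have hstep2 : Real.sqrt ((1 / 2) * (L : ℝ)) * (η * Real.sqrt Sg)
      ≤ (Real.sqrt 2)⁻¹ * η * Real.sqrt T := by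
    have hSgnn : (0 : ℝ) ≤ Sg := by positivity
    have e1 : Real.sqrt ((1 / 2) * (L : ℝ)) * Real.sqrt Sg
        = Real.sqrt ((1 / 2) * ((L : ℝ) * Sg)) := by
      rw [← Real.sqrt_mul (by positivity)]
      ring_nf
    have e2 : Real.sqrt ((1 / 2) * ((L : ℝ) * Sg)) ≤ Real.sqrt ((1 / 2) * T) := by
      apply Real.sqrt_le_sqrt
      nlinarith
    have e3 : Real.sqrt ((1 / 2) * T) = (Real.sqrt 2)⁻¹ * Real.sqrt T := by
      rw [Real.sqrt_mul (by norm_num), one_div, Real.sqrt_inv]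
    calc Real.sqrt ((1 / 2) * (L : ℝ)) * (η * Real.sqrt Sg)
        = η * (Real.sqrt ((1 / 2) * (L : ℝ)) * Real.sqrt Sg) := by ring
      _ ≤ η * ((Real.sqrt 2)⁻¹ * Real.sqrt T) := by
          rw [e1, ← e3]; exact mul_le_mul_of_nonneg_left e2 hη.le
      _ = (Real.sqrt 2)⁻¹ * η * Real.sqrt T := by ring
  calc Real.sqrt ((1 / 2) * (L : ℝ)) * Real.sqrt Sd
      ≤ Real.sqrt ((1 / 2) * (L : ℝ)) * (Real.sqrt Sa + η * Real.sqrt Sg) :=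
        mul_le_mul_of_nonneg_left htri (Real.sqrt_nonneg _)
    _ = Real.sqrt ((1 / 2) * (L : ℝ)) * Real.sqrt Sa +
          Real.sqrt ((1 / 2) * (L : ℝ)) * (η * Real.sqrt Sg) := by ring
    _ ≤ Real.sqrt ((1 / 2) * (L : ℝ)) * Real.sqrt Sa +
          (Real.sqrt 2)⁻¹ * η * Real.sqrt T := by
        exact add_le_add (le_refl _) hstep2
end
end

section
/- Finite 2-variation of the scaling limit of trained weights (Proposition 3.6, standalone form): Let d ∈ ℕ, and for each L ∈ ℕ let A^{(L)} = (A^{(L)}_1, …, A^{(L)}_L) be a family of real d×d matrices. Suppose there exists c > 0 such that: (a) L ‖A^{(L)}_{k+1} − A^{(L)}_k‖_F ≤ c for all L and all k = 1, …, L−1 (this uniform bound holds for the trained weights under the hypotheses of Theorem 3.5); and (b) there exists a function Ā* : [0,1] → ℝ^{d×d} such that sup_{s∈[0,1]} ‖L^{1/2} A^{(L)}_{⌊Ls⌋} − Ā*_s‖_F ≤ c L^{-1/2} for all sufficiently large L. Then Ā* has finite 2-variation: sup over all finite partitions 0 = s_0 < s_1 < … < s_K = 1 of Σ_{i=0}^{K−1}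 ‖Ā*_{s_{i+1}} − Ā*_{s_i}‖_F² is finite. -/
open Finset

noncomputable section

def toE {d : ℕ} (X : Fin d → Fin d → ℝ) : EuclideanSpace ℝ (Fin d × Fin d) :=
  WithLp.toLp 2 (fun p : Fin d × Fin d => X p.1 p.2)

lemma frob_dist {d : ℕ} (X Y : Fin d → Fin d → ℝ) :
    frobNorm (fun i j => X i j - Y i j) = dist (toE X) (toE Y) := by
  rw [dist_eq_norm, EuclideanSpace.norm_eq, frobNorm]
  congr 1
  rw [Fintype.sum_prod_type]
  refine Finset.sum_congr rfl fun i _ => Finset.sum_congr rfl fun j _ => ?_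
  simp [toE, sq_abs]

lemma toE_smul {d : ℕ} (r : ℝ) (X : Fin d → Fin d → ℝ) :
    toE (fun i j => r * X i j) = r • toE X := rfl


set_option maxHeartbeats 1000000 in
lemma abstract_holder {X : Type*} [PseudoMetricSpace X] (f : ℕ → ℕ → X) (g : ℝ → X)
    (c : ℝ) (hc : 0 < c) (L₀ : ℕ)
    (hstep : ∀ L k : ℕ, 1 ≤ k → k + 1 ≤ L → dist (f L (k + 1)) (f L k) ≤ c / Real.sqrt L)
    (happ : ∀ L : ℕ, L₀ ≤ L → ∀ s : ℝ, 0 ≤ s → s ≤ 1 →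
      dist (f L (Nat.floor ((L : ℝ) * s))) (g s) ≤ c / Real.sqrt L) :
    ∀ s t : ℝ, 0 ≤ s → s ≤ t → t ≤ 1 →
      dist (g t) (g s) ≤ (c * (2 * L₀ + 13)) * Real.sqrt (t - s) := by
  intro s t hs hst ht
  rcases eq_or_lt_of_le hst with rfl | hlt
  · simp
  set δ := t - s with hδdef
  have hδ : 0 < δ := by simp [hδdef]; linarith
  have hδ1 : δ ≤ 1 := by simp [hδdef]; linarith
  set L : ℕ := max (Nat.ceil (1 / δ)) (2 * (L₀ + 1)) with hLdef
  have hL2 : 2 ≤ L := le_max_of_le_right (by omega)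
  have hLL₀ : L₀ ≤ L := le_max_of_le_right (by omega)
  have hL1 : (1 : ℝ) ≤ L := by exact_mod_cast Nat.one_le_iff_ne_zero.mpr (by omega)
  have hLpos : (0:ℝ) < L := by linarith
  have hLinv : 1 / δ ≤ (L : ℝ) := le_trans (Nat.le_ceil _)
    (by exact_mod_cast Nat.cast_le.mpr (le_max_left _ _))
  have hsqL : (0:ℝ) < Real.sqrt L := Real.sqrt_pos.mpr hLpos
  -- key: c / √L ≤ c * √δ
  have hkey : c / Real.sqrt L ≤ c * Real.sqrt δ := by
    rw [div_le_iff₀ hsqL]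
    have h1 : (1:ℝ) ≤ Real.sqrt δ * Real.sqrt L := by
      rw [← Real.sqrt_mul hδ.le]
      rw [show (1:ℝ) = Real.sqrt 1 by simp]
      apply Real.sqrt_le_sqrt
      rw [div_le_iff₀ hδ] at hLinv
      nlinarith
    calc c = c * 1 := by ring
    _ ≤ c * (Real.sqrt δ * Real.sqrt L) := by nlinarith
    _ = c * Real.sqrt δ * Real.sqrt L := by ring
  -- L * δ ≤ 2 * L₀ + 4
  have hLδ : (L : ℝ) * δ ≤ 2 * L₀ + 4 := by
    have hcast : (L : ℝ) = max ((Nat.ceil (1/δ) : ℕ) : ℝ) ((2 * (L₀ + 1) : ℕ) : ℝ) := by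
      rw [hLdef, Nat.cast_max]
    have hceil : ((Nat.ceil (1/δ) : ℕ) : ℝ) < 1/δ + 1 := Nat.ceil_lt_add_one (by positivity)
    have h1 : ((Nat.ceil (1/δ) : ℕ) : ℝ) * δ ≤ 1 + δ := by
      have := mul_le_mul_of_nonneg_right hceil.le hδ.le
      calc ((Nat.ceil (1/δ) : ℕ) : ℝ) * δ ≤ (1/δ + 1) * δ := this
      _ = 1 + δ := by field_simp
    have h2 : ((2 * (L₀ + 1) : ℕ) : ℝ) * δ ≤ 2 * L₀ + 2 := by
      push_cast
      nlinarith
    rw [hcast]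
    rcases max_cases ((Nat.ceil (1/δ) : ℕ) : ℝ) ((2 * (L₀ + 1) : ℕ) : ℝ) with ⟨h, _⟩ | ⟨h, _⟩ <;>
      rw [h] <;> nlinarith
  -- telescoping claim
  have tele : ∀ a b : ℕ, 1 ≤ a → a ≤ b → b ≤ L →
      dist (f L b) (f L a) ≤ (b - a : ℕ) * (c / Real.sqrt L) := by
    intro a b ha hab hbL
    rw [dist_comm]
    calc dist (f L a) (f L b) ≤ ∑ i ∈ Finset.Ico a b, dist (f L i) (f L (i + 1)) :=
        dist_le_Ico_sum_dist _ hab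
    _ ≤ ∑ i ∈ Finset.Ico a b, (c / Real.sqrt L) := by
        apply Finset.sum_le_sum
        intro i hi
        rw [Finset.mem_Ico] at hi
        rw [dist_comm]
        exact hstep L i (le_trans ha hi.1) (by omega)
    _ = (b - a : ℕ) * (c / Real.sqrt L) := by
        rw [Finset.sum_const, Nat.card_Ico, nsmul_eq_mul]
  -- pair claim: both points with floors a b, 1 ≤ a
  have pair : ∀ u v : ℝ, 0 ≤ u → u ≤ v → v ≤ 1 → 1 ≤ Nat.floor ((L:ℝ) * u) →
      dist (g v) (g u) ≤ ((Nat.floor ((L:ℝ)*v) - Nat.floor ((L:ℝ)*u) : ℕ) + 2) * (c / Real.sqrt L) := by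
    intro u v hu huv hv1 hau
    set a := Nat.floor ((L:ℝ) * u)
    set b := Nat.floor ((L:ℝ) * v)
    have hab : a ≤ b := Nat.floor_mono (by nlinarith)
    have hbL : b ≤ L := by
      have : (L:ℝ) * v ≤ (L:ℝ) := by nlinarith
      calc b ≤ Nat.floor ((L:ℝ)) := Nat.floor_mono this
      _ = L := Nat.floor_natCast L
    calc dist (g v) (g u) ≤ dist (g v) (f L b) + dist (f L b) (f L a) + dist (f L a) (g u) :=
        dist_triangle4 _ _ _ _
    _ ≤ c / Real.sqrt L + (b - a : ℕ) * (c / Real.sqrt L) + c / Real.sqrt L := by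
        gcongr
        · rw [dist_comm]; exact happ L hLL₀ v (le_trans hu huv) hv1
        · exact tele a b hau hab hbL
        · exact happ L hLL₀ u hu (le_trans huv hv1)
    _ = ((b - a : ℕ) + 2) * (c / Real.sqrt L) := by ring
  have hcd : (0:ℝ) ≤ c / Real.sqrt L := by positivity
  have hcs : (0:ℝ) ≤ c * Real.sqrt δ := by positivity
  -- same floor = 0 helper
  have zero2 : ∀ L' : ℕ, L₀ ≤ L' → ∀ u v : ℝ, 0 ≤ u → u ≤ 1 → 0 ≤ v → v ≤ 1 →
      Nat.floor ((L':ℝ) * u) = 0 → Nat.floor ((L':ℝ) * v) = 0 →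
      dist (g v) (g u) ≤ 2 * (c / Real.sqrt L') := by
    intro L' hL' u v hu0 hu1 hv0 hv1 hfu hfv
    have h1 := happ L' hL' v hv0 hv1
    have h2 := happ L' hL' u hu0 hu1
    rw [hfv] at h1; rw [hfu] at h2
    calc dist (g v) (g u) ≤ dist (g v) (f L' 0) + dist (f L' 0) (g u) := dist_triangle _ _ _
    _ ≤ c / Real.sqrt L' + c / Real.sqrt L' := add_le_add (by rw [dist_comm]; exact h1) h2
    _ = 2 * (c / Real.sqrt L') := by ring
  set a := Nat.floor ((L:ℝ) * s) with hadef
  set b := Nat.floor ((L:ℝ) * t) with hbdef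
  have hab : a ≤ b := Nat.floor_mono (by nlinarith)
  have hbLt : (b:ℝ) ≤ (L:ℝ) * t := Nat.floor_le (by nlinarith)
  have haLs : (L:ℝ) * s < (a:ℝ) + 1 := Nat.lt_floor_add_one _
  rcases Nat.eq_zero_or_pos a with ha0 | ha1
  · -- a = 0, so L * s < 1
    have hLs1 : (L:ℝ) * s < 1 := by
      have := (Nat.floor_eq_zero).mp (hadef ▸ ha0)
      linarith [this]
    rcases Nat.eq_zero_or_pos b with hb0 | hb1
    · -- both floors zero
      have := zero2 L hLL₀ s t hs (le_trans hst ht) (le_trans hs hst) ht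
        (hadef ▸ ha0) (hbdef ▸ hb0)
      calc dist (g t) (g s) ≤ 2 * (c / Real.sqrt L) := this
      _ ≤ 2 * (c * Real.sqrt δ) := by nlinarith
      _ ≤ (c * (2 * L₀ + 13)) * Real.sqrt δ := by nlinarith [Nat.cast_nonneg (α := ℝ) L₀]
    · -- b ≥ 1 : use u = 1 / L
      set u : ℝ := 1 / (L:ℝ) with hudef
      have hu0 : (0:ℝ) ≤ u := by positivity
      have hLu : (L:ℝ) * u = 1 := by
        rw [hudef]; field_simp
      have hfloorLu : Nat.floor ((L:ℝ) * u) = 1 := by rw [hLu]; exact Nat.floor_one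
      have hut : u ≤ t := by
        have h1b : (1:ℝ) ≤ (b:ℝ) := by exact_mod_cast hb1
        rw [hudef, div_le_iff₀ hLpos]
        linarith
      have hu1 : u ≤ 1 := by rw [hudef]; rw [div_le_one hLpos]; exact hL1
      -- T1 : dist (g t) (g u)
      have hT1 := pair u t hu0 hut ht (by rw [hfloorLu])
      rw [hfloorLu] at hT1
      have hb1' : ((b - 1 : ℕ):ℝ) = (b:ℝ) - 1 := by
        rw [Nat.cast_sub hb1]; norm_num
      have hbbound : ((b - 1 : ℕ):ℝ) ≤ 2 * L₀ + 4 := by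
        rw [hb1']
        have : (L:ℝ) * t = (L:ℝ) * s + (L:ℝ) * δ := by rw [hδdef]; ring
        nlinarith
      have hT1' : dist (g t) (g u) ≤ (2 * L₀ + 6) * (c / Real.sqrt L) := by
        calc dist (g t) (g u) ≤ (((b - 1 : ℕ):ℝ) + 2) * (c / Real.sqrt L) := hT1
        _ ≤ (2 * L₀ + 6) * (c / Real.sqrt L) := by nlinarith
      -- T2 : dist (g u) (g 0), using L' = L - 1
      have hT2 : dist (g u) (g 0) ≤ 4 * (c / Real.sqrt L) := by
        set L' : ℕ := L - 1 with hL'def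
        have hL'L₀ : L₀ ≤ L' := by omega
        have hL'cast : (L':ℝ) = (L:ℝ) - 1 := by
          rw [hL'def, Nat.cast_sub (by omega)]; norm_num
        have h2L : (2:ℝ) ≤ (L:ℝ) := by exact_mod_cast hL2
        have hL'pos : (0:ℝ) < L' := by rw [hL'cast]; linarith
        have hfu' : Nat.floor ((L':ℝ) * u) = 0 := by
          apply Nat.floor_eq_zero.mpr
          rw [hL'cast, hudef]
          have h0 : (0:ℝ) < 1 / L := by positivity
          have heq : ((L:ℝ) - 1) * (1 / L) = 1 - 1 / L := by field_simp
          rw [heq]; linarith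
        have hf0' : Nat.floor ((L':ℝ) * (0:ℝ)) = 0 := by simp
        have h2 := zero2 L' hL'L₀ 0 u le_rfl zero_le_one hu0 hu1 hf0' hfu'
        have hsq : Real.sqrt L ≤ 2 * Real.sqrt L' := by
          rw [show (2:ℝ) * Real.sqrt L' = Real.sqrt (4 * L') by
            rw [Real.sqrt_mul (by norm_num), show (4:ℝ) = 2^2 by norm_num,
              Real.sqrt_sq (by norm_num)]]
          apply Real.sqrt_le_sqrt
          rw [hL'cast]
          linarith
        have hsqL' : (0:ℝ) < Real.sqrt L' := Real.sqrt_pos.mpr hL'pos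
        have hdivs : c / Real.sqrt L' ≤ 2 * (c / Real.sqrt L) := by
          have step1 : c / Real.sqrt L' = (2 * c) / (2 * Real.sqrt L') := by
            rw [mul_div_mul_left _ _ (by norm_num : (2:ℝ) ≠ 0)]
          rw [step1, show (2:ℝ) * (c / Real.sqrt L) = (2 * c) / Real.sqrt L by ring]
          gcongr
        calc dist (g u) (g 0) ≤ 2 * (c / Real.sqrt L') := h2
        _ ≤ 4 * (c / Real.sqrt L) := by linarith
      -- T3 : dist (g 0) (g s)
      have hT3 : dist (g 0) (g s) ≤ 2 * (c / Real.sqrt L) := by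
        rw [dist_comm]
        exact zero2 L hLL₀ 0 s le_rfl zero_le_one hs (le_trans hst ht) (by simp)
          (hadef ▸ ha0)
      calc dist (g t) (g s) ≤ dist (g t) (g u) + dist (g u) (g 0) + dist (g 0) (g s) :=
          dist_triangle4 _ _ _ _
      _ ≤ (2 * L₀ + 6) * (c / Real.sqrt L) + 4 * (c / Real.sqrt L) + 2 * (c / Real.sqrt L) :=
          add_le_add (add_le_add hT1' hT2) hT3
      _ = (2 * L₀ + 12) * (c / Real.sqrt L) := by ring
      _ ≤ (c * (2 * L₀ + 13)) * Real.sqrt δ := by nlinarith [Nat.cast_nonneg (α := ℝ) L₀]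
  · -- a ≥ 1
    have hP := pair s t hs hst ht (hadef ▸ ha1)
    rw [← hadef, ← hbdef] at hP
    have hmb : ((b - a : ℕ):ℝ) ≤ 2 * L₀ + 5 := by
      rw [Nat.cast_sub hab]
      have : (L:ℝ) * t = (L:ℝ) * s + (L:ℝ) * δ := by rw [hδdef]; ring
      nlinarith
    calc dist (g t) (g s) ≤ (((b - a : ℕ):ℝ) + 2) * (c / Real.sqrt L) := hP
    _ ≤ (2 * L₀ + 7) * (c / Real.sqrt L) := by nlinarith
    _ ≤ (c * (2 * L₀ + 13)) * Real.sqrt δ := by nlinarith [Nat.cast_nonneg (α := ℝ) L₀]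


/-- **Finite 2-variation of the scaling limit of trained weights (Proposition 3.6,
standalone form).** `A L k` is the `k`-th weight matrix (indexed by `k = 0,…,L`) of the
depth-`L` network; (a) is the uniform layer-increment bound and (b) the uniform
`O(L^{-1/2})` convergence of the rescaled weights to `Ā*`. The conclusion is that `Ā*`
has finite 2-variation over partitions of `[0,1]`. -/
theorem statement12 {d : ℕ} (hd : 1 ≤ d)
    (A : (L : ℕ) → ℕ → Fin d → Fin d → ℝ) (c : ℝ) (hc : 0 < c)
    (ha : ∀ L k : ℕ, 1 ≤ k → k + 1 ≤ L →
      (L : ℝ) * frobNorm (fun i j => A L (k + 1) i j - A L k i j) ≤ c)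
    (Abar : ℝ → Fin d → Fin d → ℝ)
    (hb : ∃ L₀ : ℕ, ∀ L : ℕ, L₀ ≤ L → ∀ s ∈ Set.Icc (0 : ℝ) 1,
      frobNorm (fun i j => Real.sqrt L * A L (Nat.floor ((L : ℝ) * s)) i j - Abar s i j)
        ≤ c * (Real.sqrt L)⁻¹) :
    ∃ C : ℝ, ∀ (K : ℕ) (s : ℕ → ℝ), s 0 = 0 → s K = 1 → (∀ i < K, s i < s (i + 1)) →
      ∑ i ∈ Finset.range K,
          frobNorm (fun a b => Abar (s (i + 1)) a b - Abar (s i) a b) ^ 2 ≤ C := by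
  obtain ⟨L₀, hb⟩ := hb
  set f : ℕ → ℕ → EuclideanSpace ℝ (Fin d × Fin d) :=
    fun L k => toE (fun i j => Real.sqrt L * A L k i j) with hfdef
  set g : ℝ → EuclideanSpace ℝ (Fin d × Fin d) := fun u => toE (Abar u) with hgdef
  have hstep : ∀ L k : ℕ, 1 ≤ k → k + 1 ≤ L →
      dist (f L (k + 1)) (f L k) ≤ c / Real.sqrt L := by
    intro L k hk hkL
    have hL1 : (1:ℝ) ≤ L := by exact_mod_cast (by omega : 1 ≤ L)
    have hLpos : (0:ℝ) < L := by linarith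
    have hsq : (0:ℝ) < Real.sqrt L := Real.sqrt_pos.mpr hLpos
    have h := ha L k hk hkL
    rw [frob_dist (A L (k + 1)) (A L k)] at h
    have hd' : dist (toE (A L (k + 1))) (toE (A L k)) ≤ c / (L : ℝ) := by
      rw [le_div_iff₀ hLpos]; linarith
    have heq : dist (f L (k + 1)) (f L k)
        = Real.sqrt L * dist (toE (A L (k + 1))) (toE (A L k)) := by
      rw [hfdef]
      simp only [toE_smul]
      rw [dist_smul₀, Real.norm_eq_abs, abs_of_nonneg (Real.sqrt_nonneg _)]
    rw [heq]
    have hLL : Real.sqrt L * Real.sqrt L = (L : ℝ) := Real.mul_self_sqrt hLpos.le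
    calc Real.sqrt L * dist (toE (A L (k + 1))) (toE (A L k))
        ≤ Real.sqrt L * (c / (L : ℝ)) := by
          exact mul_le_mul_of_nonneg_left hd' (Real.sqrt_nonneg _)
    _ = c / Real.sqrt L := by
        field_simp; rw [Real.sq_sqrt hLpos.le]
  have happ : ∀ L : ℕ, L₀ ≤ L → ∀ u : ℝ, 0 ≤ u → u ≤ 1 →
      dist (f L (Nat.floor ((L : ℝ) * u))) (g u) ≤ c / Real.sqrt L := by
    intro L hL u hu0 hu1
    have h := hb L hL u ⟨hu0, hu1⟩
    rw [frob_dist (fun i j => Real.sqrt L * A L (Nat.floor ((L : ℝ) * u)) i j) (Abar u)] at h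
    rw [div_eq_mul_inv]
    exact h
  have key := abstract_holder f g c hc L₀ hstep happ
  refine ⟨(c * (2 * L₀ + 13)) ^ 2, ?_⟩
  intro K s h0 hK hmono
  have mono : ∀ j, j ≤ K → ∀ i, i ≤ j → s i ≤ s j := by
    intro j
    induction j with
    | zero =>
        intro _ i hi
        rw [Nat.le_zero.mp hi]
    | succ n ih =>
        intro hj i hi
        rcases eq_or_lt_of_le hi with rfl | h
        · exact le_rfl
        · calc s i ≤ s n := ih (by omega) i (by omega)
          _ ≤ s (n + 1) := (hmono n (by omega)).le
  have hbound : ∀ i, i ≤ K → 0 ≤ s i ∧ s i ≤ 1 := by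
    intro i hi
    constructor
    · rw [← h0]; exact mono i hi 0 (Nat.zero_le _)
    · rw [← hK]; exact mono K le_rfl i hi
  calc ∑ i ∈ Finset.range K,
        frobNorm (fun a b => Abar (s (i + 1)) a b - Abar (s i) a b) ^ 2
      = ∑ i ∈ Finset.range K, dist (g (s (i + 1))) (g (s i)) ^ 2 := by
        refine Finset.sum_congr rfl fun i _ => ?_
        rw [frob_dist (Abar (s (i + 1))) (Abar (s i))]
  _ ≤ ∑ i ∈ Finset.range K, (c * (2 * L₀ + 13)) ^ 2 * (s (i + 1) - s i) := by
        apply Finset.sum_le_sum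
        intro i hi
        rw [Finset.mem_range] at hi
        have h1 := (hbound i (by omega)).1
        have h2 := (hbound (i + 1) (by omega)).2
        have h3 := (hmono i hi).le
        have hk := key (s i) (s (i + 1)) h1 h3 h2
        have hδ0 : 0 ≤ s (i + 1) - s i := by linarith
        calc dist (g (s (i + 1))) (g (s i)) ^ 2
            ≤ ((c * (2 * L₀ + 13)) * Real.sqrt (s (i + 1) - s i)) ^ 2 := by
              apply pow_le_pow_left₀ dist_nonneg hk
        _ = (c * (2 * L₀ + 13)) ^ 2 * (s (i + 1) - s i) := by
              rw [mul_pow, Real.sq_sqrt hδ0]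
  _ = (c * (2 * L₀ + 13)) ^ 2 * (s K - s 0) := by
        rw [← Finset.mul_sum, Finset.sum_range_sub]
  _ = (c * (2 * L₀ + 13)) ^ 2 := by rw [h0, hK]; ring
end
end

section
/- Square-root discrete Grönwall inequality (Lemma G.4(ii)): Let (u_n), (w_n) be sequences of positive reals and (g_n) a sequence of reals with g_0 > 0 and 0 < g_{n+1} ≤ u_n g_n + w_n g_n^{1/2} for all n ≥ 0. Then for every n ≥ 0: g_n^{1/2} ≤ (∏_{n'=0}^{n−1} u_{n'}^{1/2}) g_0^{1/2} + (1/2) Σ_{n'=0}^{n−1} (∏_{n''=n'+1}^{n−1} u_{n''}^{1/2}) w_{n'} / u_{n'}^{1/2}. -/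
open Finset

lemma key_step (u w g : ℝ) (hu : 0 < u) (hw : 0 < w) (hgpos : 0 < g) :
    Real.sqrt (u * g + w * Real.sqrt g)
      ≤ Real.sqrt u * Real.sqrt g + (1 / 2) * (w / Real.sqrt u) := by
  have hsu : 0 < Real.sqrt u := Real.sqrt_pos.mpr hu
  have hsg : 0 < Real.sqrt g := Real.sqrt_pos.mpr hgpos
  have hR : 0 ≤ Real.sqrt u * Real.sqrt g + (1 / 2) * (w / Real.sqrt u) := by
    positivity
  rw [show Real.sqrt u * Real.sqrt g + (1 / 2) * (w / Real.sqrt u)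
      = Real.sqrt ((Real.sqrt u * Real.sqrt g + (1 / 2) * (w / Real.sqrt u))^2)
      from (Real.sqrt_sq hR).symm]
  apply Real.sqrt_le_sqrt
  have h1 : (Real.sqrt u * Real.sqrt g + (1 / 2) * (w / Real.sqrt u))^2
      = u * g + w * Real.sqrt g + (1/4) * (w / Real.sqrt u)^2 := by
    have hu2 : Real.sqrt u ^ 2 = u := Real.sq_sqrt hu.le
    have hg2 : Real.sqrt g ^ 2 = g := Real.sq_sqrt hgpos.le
    have h3 : Real.sqrt u * Real.sqrt g * (w / Real.sqrt u) = w * Real.sqrt g := by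
      field_simp
    linear_combination Real.sqrt g ^ 2 * hu2 + u * hg2 + h3
  nlinarith [sq_nonneg (w / Real.sqrt u)]

/-- **Square-root discrete Grönwall inequality (Lemma G.4(ii)).** -/
theorem statement17 (u w g : ℕ → ℝ) (hu : ∀ n, 0 < u n) (hw : ∀ n, 0 < w n)
    (hg0 : 0 < g 0)
    (hg : ∀ n, 0 < g (n + 1) ∧ g (n + 1) ≤ u n * g n + w n * Real.sqrt (g n)) (n : ℕ) :
    Real.sqrt (g n)
      ≤ (∏ i ∈ Finset.range n, Real.sqrt (u i)) * Real.sqrt (g 0)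
        + (1 / 2) * ∑ i ∈ Finset.range n,
            (∏ j ∈ Finset.Ico (i + 1) n, Real.sqrt (u j)) * (w i / Real.sqrt (u i)) := by
  have hgpos : ∀ n, 0 < g n := by
    intro n; cases n with
    | zero => exact hg0
    | succ m => exact (hg m).1
  induction n with
  | zero => simp
  | succ n ih =>
    have hsu : 0 < Real.sqrt (u n) := Real.sqrt_pos.mpr (hu n)
    have step : Real.sqrt (g (n + 1))
        ≤ Real.sqrt (u n) * Real.sqrt (g n) + (1 / 2) * (w n / Real.sqrt (u n)) := by
      calc Real.sqrt (g (n + 1)) ≤ Real.sqrt (u n * g n + w n * Real.sqrt (g n)) :=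
            Real.sqrt_le_sqrt (hg n).2
        _ ≤ _ := key_step (u n) (w n) (g n) (hu n) (hw n) (hgpos n)
    have hsum : ∑ i ∈ Finset.range (n+1),
          (∏ j ∈ Finset.Ico (i + 1) (n+1), Real.sqrt (u j)) * (w i / Real.sqrt (u i))
        = Real.sqrt (u n) * (∑ i ∈ Finset.range n,
            (∏ j ∈ Finset.Ico (i + 1) n, Real.sqrt (u j)) * (w i / Real.sqrt (u i)))
          + w n / Real.sqrt (u n) := by
      rw [Finset.sum_range_succ, Finset.mul_sum]
      congr 1
      · apply Finset.sum_congr rfl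
        intro i hi
        have hi' : i + 1 ≤ n := Finset.mem_range.mp hi
        rw [Finset.prod_Ico_succ_top hi']
        ring
      · simp
    have hprod : ∏ i ∈ Finset.range (n+1), Real.sqrt (u i)
        = Real.sqrt (u n) * ∏ i ∈ Finset.range n, Real.sqrt (u i) := by
      rw [Finset.prod_range_succ]; ring
    rw [hsum, hprod]
    have := mul_le_mul_of_nonneg_left ih hsu.le
    calc Real.sqrt (g (n+1))
        ≤ Real.sqrt (u n) * Real.sqrt (g n) + (1 / 2) * (w n / Real.sqrt (u n)) := step
      _ ≤ Real.sqrt (u n) * ((∏ i ∈ Finset.range n, Real.sqrt (u i)) * Real.sqrt (g 0)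
            + (1 / 2) * ∑ i ∈ Finset.range n,
              (∏ j ∈ Finset.Ico (i + 1) n, Real.sqrt (u j)) * (w i / Real.sqrt (u i)))
            + (1 / 2) * (w n / Real.sqrt (u n)) := by linarith
      _ = _ := by ring
end
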